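/- n-equivalent words satisfy the same existential first-order sentences with at most n quantifiers: let u : α → Σ and v : β → Σ be words over linear orders with u ∼ₙ v. Then for every quantifier-free bounded formula φ : L_Σ.BoundedFormula Empty n (φ.IsQF), the L_Σ-structure of u satisfies the existential closure φ.exs if and only if the L_Σ-structure of v does. -/

import Mathlib

open FirstOrder

/-- A finite word `s : List A` is a subword of a word `w : α → A` over a linear order `α`
if there is a strictly monotone map `g` from `Fin s.length` to `α` picking out `s`. -/
def IsSubword {A : Type} {α : Type} [LinearOrder α] (s : List A) (w : α → A) : Prop :=
  ∃ g : Fin s.length → α, StrictMono g ∧ ∀ i, w (g i) = s.get i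

/-- Two words (over possibly different linear orders) are `n`-equivalent if they have
exactly the same subwords of length at most `n`. -/
def NEquiv {A : Type} (n : ℕ) {α : Type} {β : Type} [LinearOrder α] [LinearOrder β]
    (u : α → A) (v : β → A) : Prop :=
  ∀ s : List A, s.length ≤ n → (IsSubword s u ↔ IsSubword s v)

/-- The first-order language of words over the alphabet `A`: one binary relation `<`
and a unary relation `P_a` for each letter `a : A`. -/
def wordLang (A : Type) : Language where
  Functions := fun _ => Empty
  Relations := fun n =>
    match n with
    | 1 => A
    | 2 => PUnit
    | _ => Empty

/-- A word `w : α → A` as a structure for `wordLang A`, with universe `α`: `<` is the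
order of `α` and `P_a` holds of the positions labelled `a`. -/
def wordStructure {A : Type} {α : Type} [LinearOrder α] (w : α → A) :
    (wordLang A).Structure α where
  funMap := fun {n} f _ => Empty.elim f
  RelMap := fun {n} r x =>
    match n, r, x with
    | 0, r, _ => Empty.elim r
    | 1, a, x => w (x 0) = a
    | 2, _, x => x 0 < x 1
    | (_ + 3), r, _ => Empty.elim r

/-- The word `w` satisfies the sentence `φ` of `wordLang A`. -/
def RealizesSentence {A : Type} {α : Type} [LinearOrder α] (w : α → A)
    (φ : (wordLang A).Sentence) : Prop :=
  letI := wordStructure w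
  φ.Realize α

-- every term of wordLang is a variable
lemma wordLang_term_eq_var {A γ : Type} (t : (wordLang A).Term γ) : ∃ a, t = Language.Term.var a := by
  cases t with
  | var a => exact ⟨a, rfl⟩
  | func f ts => exact f.elim

lemma qf_transfer {A α β : Type} [LinearOrder α] [LinearOrder β]
    (u : α → A) (v : β → A) {n : ℕ} (x : Fin n → α) (y : Fin n → β)
    (hord : ∀ i j, x i < x j ↔ y i < y j)
    (hlab : ∀ i, u (x i) = v (y i))
    (e₁ : Empty → α) (e₂ : Empty → β) :
    ∀ {φ : (wordLang A).BoundedFormula Empty n}, φ.IsQF →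
      ((@Language.BoundedFormula.Realize _ α (wordStructure u) _ _ φ e₁ x) ↔
       (@Language.BoundedFormula.Realize _ β (wordStructure v) _ _ φ e₂ y)) := by
  letI := wordStructure u
  letI := wordStructure v
  have heq : ∀ i j : Fin n, x i = x j ↔ y i = y j := by
    intro i j
    constructor
    · intro hxy
      exact le_antisymm (not_lt.1 (fun hl => absurd ((hord j i).2 hl) (hxy ▸ lt_irrefl _)))
        (not_lt.1 (fun hl => absurd ((hord i j).2 hl) (hxy ▸ lt_irrefl _)))
    · intro hxy
      exact le_antisymm (not_lt.1 (fun hl => absurd ((hord j i).1 hl) (hxy ▸ lt_irrefl _)))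
        (not_lt.1 (fun hl => absurd ((hord i j).1 hl) (hxy ▸ lt_irrefl _)))
  intro φ hφ
  induction hφ with
  | falsum => simp [Language.BoundedFormula.Realize]
  | imp _ _ ih₁ ih₂ => simp [Language.BoundedFormula.Realize, ih₁, ih₂]
  | of_isAtomic hA =>
    cases hA with
    | equal t₁ t₂ =>
      obtain ⟨a₁, rfl⟩ := wordLang_term_eq_var t₁
      obtain ⟨a₂, rfl⟩ := wordLang_term_eq_var t₂
      cases a₁ with
      | inl e => exact e.elim
      | inr i =>
        cases a₂ with
        | inl e => exact e.elim
        | inr j =>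
          simp only [Language.BoundedFormula.realize_bdEqual, Language.Term.realize_var,
            Sum.elim_inr]
          exact heq i j
    | @rel l R ts =>
      match l, R with
      | 1, a =>
        obtain ⟨a₀, h₀⟩ := wordLang_term_eq_var (ts 0)
        cases a₀ with
        | inl e => exact e.elim
        | inr i =>
          rw [Language.BoundedFormula.realize_rel, Language.BoundedFormula.realize_rel]
          show u ((ts 0).realize (Sum.elim e₁ x)) = a ↔ v ((ts 0).realize (Sum.elim e₂ y)) = a
          rw [h₀]
          simp only [Language.Term.realize_var, Sum.elim_inr]
          rw [hlab i]
      | 2, R =>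
        obtain ⟨a₀, h₀⟩ := wordLang_term_eq_var (ts 0)
        obtain ⟨a₁, h₁⟩ := wordLang_term_eq_var (ts 1)
        cases a₀ with
        | inl e => exact e.elim
        | inr i =>
          cases a₁ with
          | inl e => exact e.elim
          | inr j =>
            rw [Language.BoundedFormula.realize_rel, Language.BoundedFormula.realize_rel]
            show (ts 0).realize (Sum.elim e₁ x) < (ts 1).realize (Sum.elim e₁ x) ↔
              (ts 0).realize (Sum.elim e₂ y) < (ts 1).realize (Sum.elim e₂ y)
            rw [h₀, h₁]
            simp only [Language.Term.realize_var, Sum.elim_inr]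
            exact hord i j
      | 0, R => exact R.elim
      | (l + 3), R => exact R.elim

-- one direction
lemma exs_transfer {A : Type} (n : ℕ)
    {α β : Type} [LinearOrder α] [LinearOrder β]
    (u : α → A) (v : β → A) (h : NEquiv n u v)
    (φ : (wordLang A).BoundedFormula Empty n) (hφ : φ.IsQF)
    (hr : RealizesSentence u φ.exs) : RealizesSentence v φ.exs := by
  letI := wordStructure u
  letI := wordStructure v
  rw [RealizesSentence] at hr ⊢
  rw [Language.Sentence.Realize, Language.BoundedFormula.realize_exs] at hr ⊢
  obtain ⟨x, hx⟩ := hr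
  -- build subword from image of x
  classical
  set F : Finset α := Finset.image x Finset.univ with hF
  have hkn : F.card ≤ n := le_trans Finset.card_image_le (by simp)
  set k := F.card with hk
  let e : Fin k ≃o F := F.orderIsoOfFin rfl
  let s : List A := List.ofFn (fun j : Fin k => u (e j))
  have hslen : s.length = k := List.length_ofFn
  have hsget : ∀ j : Fin s.length, s.get j = u (e (Fin.cast hslen j)) := by
    intro j
    simp only [s, List.get_ofFn]
  have hsub : IsSubword s u := by
    refine ⟨fun j => (e (Fin.cast hslen j) : α), ?_, ?_⟩
    · intro i j hij
      exact Subtype.coe_lt_coe.2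
        (e.strictMono (show Fin.cast hslen i < Fin.cast hslen j from hij))
    · intro j
      rw [hsget]
  have hsub' : IsSubword s v := (h s (hslen ▸ hkn)) |>.1 hsub
  obtain ⟨g, hgmono, hgget⟩ := hsub'
  have hmem : ∀ i, x i ∈ F := fun i => Finset.mem_image.2 ⟨i, Finset.mem_univ i, rfl⟩
  let idx : Fin n → Fin k := fun i => e.symm ⟨x i, hmem i⟩
  have hidx : ∀ i, (e (idx i) : α) = x i := fun i => by simp [idx]
  let y : Fin n → β := fun i => g (Fin.cast hslen.symm (idx i))
  have hord : ∀ i j, x i < x j ↔ y i < y j := by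
    intro i j
    rw [← hidx i, ← hidx j]
    constructor
    · intro hl
      exact hgmono (by simpa using (e.lt_iff_lt.1 (Subtype.coe_lt_coe.1 hl)))
    · intro hl
      have := hgmono.lt_iff_lt.1 hl
      have : idx i < idx j := by simpa using this
      exact Subtype.coe_lt_coe.2 (e.lt_iff_lt.2 this)
  have hlab : ∀ i, u (x i) = v (y i) := by
    intro i
    rw [hgget, hsget]
    simp [hidx]
  exact ⟨y, (qf_transfer u v x y hord hlab default default hφ).1 hx⟩

/-- `n`-equivalent words satisfy the same existential closures of quantifier-free
formulas with `n` quantified variables. -/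
theorem nequiv_realize_exs {A : Type} [Finite A] [Nonempty A] (n : ℕ)
    {α β : Type} [LinearOrder α] [LinearOrder β]
    (u : α → A) (v : β → A) (h : NEquiv n u v)
    (φ : (wordLang A).BoundedFormula Empty n) (hφ : φ.IsQF) :
    RealizesSentence u φ.exs ↔ RealizesSentence v φ.exs :=
  ⟨exs_transfer n u v h φ hφ, exs_transfer n v u (fun s hs => (h s hs).symm) φ hφ⟩
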